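/- Let ν ∈ (0,1/2), h, d > 0, a, ρ_s > 0, ℓ_s² = d²/12, ℓ_k² = d²/6, c = h²/12 + ℓ_k². Define c_L²(k) = (a/ρ_s)(1+ℓ_s²k²)/(1+(cν²(1−ν)⁻²+ℓ_k²)k²) and c_{L,cl}²(k) = (a/ρ_s)/(1+(h²/12)ν²(1−ν)⁻²k²). Then c_L²(k) < c_{L,cl}²(k) whenever 0 < k² < (12/h²)(2 + (1/ν − 1)²), and c_L²(k) > c_{L,cl}²(k) whenever k² > (12/h²)(2 + (1/ν − 1)²). -/

import Mathlib

/-- Threshold behavior of longitudinal waves: the gradient phase velocity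
is slower than the classical one for `0 < k² < (12/h²)(2 + (1/ν − 1)²)` and faster above
this threshold. -/
theorem stmt_11 (ν h d a ρs ls2 lk2 c : ℝ) (hν : ν ∈ Set.Ioo (0 : ℝ) (1 / 2))
    (hh : 0 < h) (hd : 0 < d) (ha : 0 < a) (hρ : 0 < ρs)
    (hls : ls2 = d ^ 2 / 12) (hlk : lk2 = d ^ 2 / 6) (hc : c = h ^ 2 / 12 + lk2) :
    ∀ k : ℝ,
      (0 < k ^ 2 → k ^ 2 < 12 / h ^ 2 * (2 + (1 / ν - 1) ^ 2) →
        a / ρs * ((1 + ls2 * k ^ 2) / (1 + (c * ν ^ 2 / (1 - ν) ^ 2 + lk2) * k ^ 2))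
          < a / ρs / (1 + h ^ 2 / 12 * (ν ^ 2 / (1 - ν) ^ 2) * k ^ 2))
      ∧ (12 / h ^ 2 * (2 + (1 / ν - 1) ^ 2) < k ^ 2 →
        a / ρs / (1 + h ^ 2 / 12 * (ν ^ 2 / (1 - ν) ^ 2) * k ^ 2)
          < a / ρs * ((1 + ls2 * k ^ 2) / (1 + (c * ν ^ 2 / (1 - ν) ^ 2 + lk2) * k ^ 2))) := by
  obtain ⟨hν0, hν2⟩ := hν
  have h1ν : 0 < 1 - ν := by linarith
  have hp : (0:ℝ) < (1 - ν) ^ 2 := by positivity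
  have hνne : ν ≠ 0 := ne_of_gt hν0
  have hhne : h ≠ 0 := ne_of_gt hh
  subst hls hlk hc
  intro k
  have hK0 : 0 ≤ k ^ 2 := sq_nonneg k
  set q : ℝ := ν ^ 2 / (1 - ν) ^ 2 with hqdef
  have hq0 : 0 ≤ q := by positivity
  have hD2 : 0 < 1 + h ^ 2 / 12 * q * k ^ 2 := by positivity
  have hD1 : 0 < 1 + ((h ^ 2 / 12 + d ^ 2 / 6) * q + d ^ 2 / 6) * k ^ 2 := by positivity
  have haρ : 0 < a / ρs := by positivity
  have hthr : 12 / h ^ 2 * (2 + (1 / ν - 1) ^ 2) * (h ^ 2 * ν ^ 2) = 12 * (2 * ν ^ 2 + (1 - ν) ^ 2) := by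
    field_simp
  have e1 : h ^ 2 * q * k ^ 2 * (1 - ν) ^ 2 = h ^ 2 * ν ^ 2 * k ^ 2 := by
    rw [hqdef]; field_simp
  have e2 : 12 * (2 * q + 1) * (1 - ν) ^ 2 = 12 * (2 * ν ^ 2 + (1 - ν) ^ 2) := by
    rw [hqdef]; field_simp
  have hcoef : (h ^ 2 / 12 + d ^ 2 / 6) * ν ^ 2 / (1 - ν) ^ 2
      = (h ^ 2 / 12 + d ^ 2 / 6) * q := by
    rw [hqdef]; ring
  rw [hcoef]
  constructor
  · intro hKpos hlt
    have hkey : h ^ 2 * ν ^ 2 * k ^ 2 < 12 * (2 * ν ^ 2 + (1 - ν) ^ 2) := by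
      have := mul_lt_mul_of_pos_right hlt (show (0:ℝ) < h ^ 2 * ν ^ 2 by positivity)
      calc h ^ 2 * ν ^ 2 * k ^ 2 = k ^ 2 * (h ^ 2 * ν ^ 2) := by ring
        _ < 12 / h ^ 2 * (2 + (1 / ν - 1) ^ 2) * (h ^ 2 * ν ^ 2) := this
        _ = 12 * (2 * ν ^ 2 + (1 - ν) ^ 2) := hthr
    have hq2 : h ^ 2 * q * k ^ 2 < 12 * (2 * q + 1) :=
      (mul_lt_mul_iff_of_pos_right hp).mp (by rw [e1, e2]; exact hkey)
    have hbr : 0 < 12 * (2 * q + 1) - h ^ 2 * q * k ^ 2 := by linarith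
    rw [div_eq_mul_inv (a / ρs), ← one_div]
    apply mul_lt_mul_of_pos_left _ haρ
    rw [div_lt_div_iff₀ hD1 hD2]
    nlinarith [mul_pos (mul_pos (show (0:ℝ) < d ^ 2 by positivity) hKpos) hbr]
  · intro hlt
    have hKpos : 0 < k ^ 2 := lt_trans (by positivity) hlt
    have hkey : 12 * (2 * ν ^ 2 + (1 - ν) ^ 2) < h ^ 2 * ν ^ 2 * k ^ 2 := by
      have := mul_lt_mul_of_pos_right hlt (show (0:ℝ) < h ^ 2 * ν ^ 2 by positivity)
      calc 12 * (2 * ν ^ 2 + (1 - ν) ^ 2)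
          = 12 / h ^ 2 * (2 + (1 / ν - 1) ^ 2) * (h ^ 2 * ν ^ 2) := hthr.symm
        _ < k ^ 2 * (h ^ 2 * ν ^ 2) := this
        _ = h ^ 2 * ν ^ 2 * k ^ 2 := by ring
    have hq2 : 12 * (2 * q + 1) < h ^ 2 * q * k ^ 2 :=
      (mul_lt_mul_iff_of_pos_right hp).mp (by rw [e1, e2]; exact hkey)
    have hbr : 0 < h ^ 2 * q * k ^ 2 - 12 * (2 * q + 1) := by linarith
    rw [div_eq_mul_inv (a / ρs), ← one_div]
    apply mul_lt_mul_of_pos_left _ haρ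
    rw [div_lt_div_iff₀ hD2 hD1]
    nlinarith [mul_pos (mul_pos (show (0:ℝ) < d ^ 2 by positivity) hKpos) hbr]
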